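/- arXiv:1711.08227 — 3 statements merged into one kernel-verified Lean document; each statement's English description precedes it below -/
import Mathlib

section
/- A nonempty, compact, metrizable, totally disconnected, perfect topological space is homeomorphic to the Cantor set {0,1}^ℕ. -/
open Set Metric Topology Filter

namespace BrouwerCantorAux

variable {X : Type*} [MetricSpace X] [CompactSpace X] [TotallyDisconnectedSpace X]

lemma two_points (hperf : ∀ x : X, (𝓝[≠] x).NeBot)
    {C : Set X} (hC : IsOpen C) (hne : C.Nonempty) :
    ∃ x ∈ C, ∃ y ∈ C, x ≠ y := by
  obtain ⟨x, hx⟩ := hne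
  have h1 : C ∈ 𝓝[≠] x := mem_nhdsWithin_of_mem_nhds (hC.mem_nhds hx)
  haveI := hperf x
  obtain ⟨y, hy⟩ := Filter.nonempty_of_mem (Filter.inter_mem h1 self_mem_nhdsWithin)
  exact ⟨x, hx, y, hy.1, fun h => hy.2 h.symm⟩

lemma split2 (hperf : ∀ x : X, (𝓝[≠] x).NeBot)
    {C : Set X} (hC : IsClopen C) (hne : C.Nonempty) :
    ∃ A B : Set X, IsClopen A ∧ IsClopen B ∧ A.Nonempty ∧ B.Nonempty ∧
      Disjoint A B ∧ A ∪ B = C := by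
  obtain ⟨x, hx, y, hy, hxy⟩ := two_points hperf hC.isOpen hne
  have hU : IsOpen (C \ {y}) := hC.isOpen.sdiff isClosed_singleton
  have hxU : x ∈ C \ {y} := ⟨hx, by simpa using hxy⟩
  obtain ⟨V, hV, hxV, hVsub⟩ := compact_exists_isClopen_in_isOpen hU hxU
  have hVC : V ⊆ C := hVsub.trans diff_subset
  refine ⟨V, C \ V, hV, hC.diff hV, ⟨x, hxV⟩, ⟨y, hy, fun h => (hVsub h).2 rfl⟩,
    disjoint_sdiff_right, union_diff_cancel hVC⟩

/-- A good partition of `C`: a finite collection of pairwise disjoint nonempty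
clopen sets of diameter `≤ ε` whose union is `C`. -/
def GoodPart (C : Set X) (ε : ℝ) (P : Finset (Set X)) : Prop :=
  (∀ A ∈ P, IsClopen A ∧ A.Nonempty ∧ diam A ≤ ε) ∧
  (∀ A ∈ P, ∀ B ∈ P, A ≠ B → Disjoint A B) ∧
  ⋃₀ (P : Set (Set X)) = C

lemma goodPart_exists {C : Set X} (hC : IsClopen C) {ε : ℝ} (hε : 0 < ε) :
    ∃ P, GoodPart C ε P := by
  classical
  have hV : ∀ x : C, ∃ V : Set X, IsClopen V ∧ (x : X) ∈ V ∧ V ⊆ ball (x : X) (ε/2) ∩ C :=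
    fun x => compact_exists_isClopen_in_isOpen (isOpen_ball.inter hC.isOpen)
      ⟨mem_ball_self (by linarith), x.2⟩
  choose V hVclopen hVmem hVsub using hV
  have hcov : C ⊆ ⋃ x : C, V x := fun x hx => mem_iUnion.2 ⟨⟨x, hx⟩, hVmem _⟩
  obtain ⟨t, ht⟩ := hC.isClosed.isCompact.elim_finite_subcover V
    (fun x => (hVclopen x).isOpen) hcov
  set n := t.card with hn
  set e := t.equivFin with he
  set W : Fin n → Set X := fun i =>
    V (e.symm i).1 \ ⋃ j ∈ Finset.univ.filter (fun j : Fin n => j < i), V (e.symm j).1 with hWdef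
  have hWclopen : ∀ i, IsClopen (W i) := fun i =>
    (hVclopen _).diff (isClopen_biUnion_finset fun j _ => hVclopen _)
  have hWsubV : ∀ i, W i ⊆ V (e.symm i).1 := fun i => diff_subset
  have hWsubC : ∀ i, W i ⊆ C := fun i => (hWsubV i).trans fun z hz => (hVsub _ hz).2
  have hWdiam : ∀ i, diam (W i) ≤ ε := by
    intro i
    have h1 : W i ⊆ ball ((e.symm i).1 : X) (ε/2) :=
      (hWsubV i).trans fun z hz => (hVsub _ hz).1
    calc diam (W i) ≤ diam (ball ((e.symm i).1 : X) (ε/2)) := diam_mono h1 isBounded_ball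
      _ ≤ 2 * (ε/2) := diam_ball (by linarith)
      _ = ε := by ring
  have hWdisj : ∀ i j : Fin n, i ≠ j → Disjoint (W i) (W j) := by
    have key : ∀ i j : Fin n, i < j → Disjoint (W i) (W j) := by
      intro i j hij
      rw [Set.disjoint_left]
      intro a ha haj
      exact haj.2 (mem_biUnion (Finset.mem_filter.mpr ⟨Finset.mem_univ i, hij⟩) (hWsubV i ha))
    intro i j hij
    rcases lt_or_gt_of_ne hij with h | h
    · exact key i j h
    · exact (key j i h).symm
  have hWmem : ∀ x ∈ C, ∃ i, x ∈ W i := by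
    intro x hx
    have hx2 := ht hx
    simp only [mem_iUnion] at hx2
    obtain ⟨y, hyt, hxy⟩ := hx2
    have hne' : (Finset.univ.filter (fun i : Fin n => x ∈ V (e.symm i).1)).Nonempty := by
      refine ⟨e ⟨y, hyt⟩, ?_⟩
      simp only [Finset.mem_filter, Finset.mem_univ, true_and, Equiv.symm_apply_apply]
      exact hxy
    obtain ⟨i₀, hi₀, hmin⟩ := Finset.exists_min_image _ id hne'
    simp only [Finset.mem_filter, Finset.mem_univ, true_and] at hi₀
    refine ⟨i₀, hi₀, ?_⟩
    intro hmem
    simp only [mem_iUnion, Finset.mem_filter, Finset.mem_univ, true_and] at hmem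
    obtain ⟨j, hji, hxj⟩ := hmem
    have := hmin j (by simp only [Finset.mem_filter, Finset.mem_univ, true_and]; exact hxj)
    exact absurd this (by simpa using hji)
  refine ⟨(Finset.univ.image W).filter (fun A => A.Nonempty), ?_, ?_, ?_⟩
  · intro A hA
    simp only [Finset.mem_filter, Finset.mem_image, Finset.mem_univ, true_and] at hA
    obtain ⟨⟨i, rfl⟩, hne'⟩ := hA
    exact ⟨hWclopen i, hne', hWdiam i⟩
  · intro A hA B hB hAB
    simp only [Finset.mem_filter, Finset.mem_image, Finset.mem_univ, true_and] at hA hB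
    obtain ⟨⟨i, rfl⟩, -⟩ := hA
    obtain ⟨⟨j, rfl⟩, -⟩ := hB
    exact hWdisj i j (fun h => hAB (by rw [h]))
  · apply subset_antisymm
    · rintro x ⟨A, hA, hxA⟩
      simp only [Finset.coe_filter, Finset.mem_image, Finset.mem_univ, true_and,
        mem_setOf_eq] at hA
      obtain ⟨⟨i, rfl⟩, -⟩ := hA
      exact hWsubC i hxA
    · intro x hx
      obtain ⟨i, hi⟩ := hWmem x hx
      refine ⟨W i, ?_, hi⟩
      simp only [Finset.coe_filter, Finset.mem_image, Finset.mem_univ, true_and, mem_setOf_eq]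
      exact ⟨⟨i, rfl⟩, ⟨x, hi⟩⟩

lemma goodPart_succ (hperf : ∀ x : X, (𝓝[≠] x).NeBot)
    {C : Set X} {ε : ℝ} {P : Finset (Set X)} (hgp : GoodPart C ε P) (hPne : P.Nonempty) :
    ∃ P', GoodPart C ε P' ∧ P'.card = P.card + 1 := by
  classical
  obtain ⟨A, hA⟩ := hPne
  obtain ⟨hAc, hAne, hAd⟩ := hgp.1 A hA
  obtain ⟨A₁, A₂, h1c, h2c, h1ne, h2ne, hdisj, huni⟩ := split2 hperf hAc hAne
  have h1A : A₁ ⊆ A := huni ▸ subset_union_left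
  have h2A : A₂ ⊆ A := huni ▸ subset_union_right
  have h12 : A₁ ≠ A₂ := by
    intro h
    exact h1ne.not_subset_empty (by simpa [h] using Set.disjoint_iff.1 hdisj)
  have h12' : Disjoint A₁ A₂ := hdisj
  have hXne : ∀ {B : Set X}, B.Nonempty → B ⊆ A → B ∉ P.erase A := by
    intro B hBne hBA hBmem
    obtain ⟨x, hx⟩ := hBne
    exact Set.disjoint_left.1
      (hgp.2.1 B (Finset.mem_of_mem_erase hBmem) A hA (Finset.ne_of_mem_erase hBmem))
      hx (hBA hx)
  have h1nm : A₁ ∉ insert A₂ (P.erase A) := by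
    simp only [Finset.mem_insert]
    rintro (h | h)
    · exact h12 h
    · exact hXne h1ne h1A h
  have h2nm : A₂ ∉ P.erase A := hXne h2ne h2A
  set P' := insert A₁ (insert A₂ (P.erase A)) with hP'
  have hmem : ∀ B ∈ P', B = A₁ ∨ B = A₂ ∨ (B ∈ P ∧ B ≠ A) := by
    intro B hB
    simp only [hP', Finset.mem_insert, Finset.mem_erase] at hB
    rcases hB with h | h | ⟨h1, h2⟩
    · exact Or.inl h
    · exact Or.inr (Or.inl h)
    · exact Or.inr (Or.inr ⟨h2, h1⟩)
  have hbnd : Bornology.IsBounded A := isBounded_of_compactSpace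
  have hsub : ∀ B ∈ P', B ⊆ C ∧ IsClopen B ∧ B.Nonempty ∧ diam B ≤ ε := by
    intro B hB
    have hAC : A ⊆ C := hgp.2.2 ▸ subset_sUnion_of_mem hA
    rcases hmem B hB with rfl | rfl | ⟨h1, -⟩
    · exact ⟨h1A.trans hAC, h1c, h1ne, le_trans (diam_mono h1A hbnd) hAd⟩
    · exact ⟨h2A.trans hAC, h2c, h2ne, le_trans (diam_mono h2A hbnd) hAd⟩
    · obtain ⟨hc, hn, hd⟩ := hgp.1 B h1
      exact ⟨hgp.2.2 ▸ subset_sUnion_of_mem h1, hc, hn, hd⟩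
  have hdisj' : ∀ B₁ ∈ P', ∀ B₂ ∈ P', B₁ ≠ B₂ → Disjoint B₁ B₂ := by
    have key : ∀ {B : Set X}, B ∈ P → B ≠ A → Disjoint A B := fun hB hBA =>
      (hgp.2.1 _ hB A hA hBA).symm
    intro B₁ hB₁ B₂ hB₂ hne12
    rcases hmem B₁ hB₁ with rfl | rfl | ⟨hm1, hne1⟩ <;>
      rcases hmem B₂ hB₂ with rfl | rfl | ⟨hm2, hne2⟩
    · exact absurd rfl hne12
    · exact hdisj
    · exact (key hm2 hne2).mono_left h1A
    · exact hdisj.symm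
    · exact absurd rfl hne12
    · exact (key hm2 hne2).mono_left h2A
    · exact ((key hm1 hne1).mono_left h1A).symm
    · exact ((key hm1 hne1).mono_left h2A).symm
    · exact hgp.2.1 _ hm1 _ hm2 hne12
  refine ⟨P', ⟨fun B hB => (hsub B hB).2, hdisj', ?_⟩, ?_⟩
  · apply subset_antisymm
    · rintro x ⟨B, hB, hxB⟩
      exact (hsub B hB).1 hxB
    · intro x hx
      have hx' : x ∈ ⋃₀ (P : Set (Set X)) := hgp.2.2.symm ▸ hx
      obtain ⟨B, hB, hxB⟩ := hx'
      by_cases hBA : B = A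
      · subst hBA
        have := huni.symm ▸ hxB
        rcases this with h | h
        · exact ⟨A₁, by simp [hP'], h⟩
        · exact ⟨A₂, by simp [hP'], h⟩
      · exact ⟨B, by simp [hP', Finset.mem_erase, hBA, hB], hxB⟩
  · rw [hP', Finset.card_insert_of_notMem h1nm, Finset.card_insert_of_notMem h2nm,
      Finset.card_erase_of_mem hA]
    have : 1 ≤ P.card := Finset.card_pos.2 ⟨A, hA⟩
    omega

lemma goodPart_card (hperf : ∀ x : X, (𝓝[≠] x).NeBot)
    {C : Set X} (hC : IsClopen C) (hne : C.Nonempty) {ε : ℝ} (hε : 0 < ε) :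
    ∃ k₀, ∀ m, k₀ ≤ m → ∃ P, GoodPart C ε P ∧ P.card = m := by
  obtain ⟨P, hP⟩ := goodPart_exists hC hε
  have hPne : P.Nonempty := by
    obtain ⟨x, hx⟩ := hne
    have : x ∈ ⋃₀ (P : Set (Set X)) := hP.2.2.symm ▸ hx
    obtain ⟨A, hA, -⟩ := this
    exact ⟨A, hA⟩
  have key : ∀ d : ℕ, ∃ P', GoodPart C ε P' ∧ P'.card = P.card + d := by
    intro d
    induction d with
    | zero => exact ⟨P, hP, rfl⟩
    | succ d ih =>
      obtain ⟨P', hP', hcard⟩ := ih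
      have hP'ne : P'.Nonempty := Finset.card_pos.1 (by
        rw [hcard]; exact Nat.lt_of_lt_of_le (Finset.card_pos.2 hPne) (Nat.le_add_right _ _))
      obtain ⟨P'', h1, h2⟩ := goodPart_succ hperf hP' hP'ne
      exact ⟨P'', h1, by omega⟩
  refine ⟨P.card, fun m hm => ?_⟩
  obtain ⟨P', h1, h2⟩ := key (m - P.card)
  exact ⟨P', h1, by omega⟩

/-- A finite clopen partition of the whole space. -/
structure PartX (X : Type*) [TopologicalSpace X] where
  ι : Type
  [fin : Fintype ι]
  P : ι → Set X
  clopen : ∀ i, IsClopen (P i)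
  ne : ∀ i, (P i).Nonempty
  disj : ∀ i j, i ≠ j → Disjoint (P i) (P j)
  cover : ∀ x, ∃ i, x ∈ P i

attribute [instance] PartX.fin

lemma refine_exists (hperf : ∀ x : X, (𝓝[≠] x).NeBot) (Q : PartX X) {ε : ℝ} (hε : 0 < ε) :
    ∃ (n : ℕ) (R : Q.ι → (Fin n → Bool) → Set X),
      1 ≤ n ∧
      (∀ i b, IsClopen (R i b)) ∧ (∀ i b, (R i b).Nonempty) ∧
      (∀ i b, diam (R i b) ≤ ε) ∧ (∀ i b, R i b ⊆ Q.P i) ∧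
      (∀ i (b b' : Fin n → Bool), b ≠ b' → Disjoint (R i b) (R i b')) ∧
      (∀ i x, x ∈ Q.P i → ∃ b, x ∈ R i b) := by
  classical
  choose k₀ hk₀ using fun i => goodPart_card hperf (Q.clopen i) (Q.ne i) hε
  set n := max 1 (Finset.univ.sup k₀) with hn
  have hkn : ∀ i, k₀ i ≤ 2 ^ n := fun i =>
    le_trans (le_trans (Finset.le_sup (Finset.mem_univ i)) (le_max_right _ _))
      (Nat.lt_two_pow_self (n := n)).le
  choose P hP hcard using fun i => hk₀ i (2 ^ n) (hkn i)
  have hce : ∀ i, Fintype.card (↥(P i)) = Fintype.card (Fin n → Bool) := by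
    intro i
    rw [Fintype.card_coe, hcard]
    simp
  set e : ∀ i, ↥(P i) ≃ (Fin n → Bool) := fun i => Fintype.equivOfCardEq (hce i) with he
  refine ⟨n, fun i b => ((e i).symm b : Set X), le_max_left _ _, ?_, ?_, ?_, ?_, ?_, ?_⟩
  · intro i b
    exact ((hP i).1 _ ((e i).symm b).2).1
  · intro i b
    exact ((hP i).1 _ ((e i).symm b).2).2.1
  · intro i b
    exact ((hP i).1 _ ((e i).symm b).2).2.2
  · intro i b
    exact (hP i).2.2 ▸ subset_sUnion_of_mem ((e i).symm b).2
  · intro i b b' hbb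
    refine (hP i).2.1 _ ((e i).symm b).2 _ ((e i).symm b').2 ?_
    intro h
    exact hbb (by simpa using (e i).symm.injective (Subtype.ext h))
  · intro i x hx
    have : x ∈ ⋃₀ (↑(P i) : Set (Set X)) := (hP i).2.2.symm ▸ hx
    obtain ⟨A, hA, hxA⟩ := this
    exact ⟨e i ⟨A, hA⟩, by simpa using hxA⟩

variable (hperf : ∀ x : X, (𝓝[≠] x).NeBot)

noncomputable def arity (Q : PartX X) {ε : ℝ} (hε : 0 < ε) : ℕ :=
  (refine_exists hperf Q hε).choose

noncomputable def rmap (Q : PartX X) {ε : ℝ} (hε : 0 < ε) :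
    Q.ι → (Fin (arity hperf Q hε) → Bool) → Set X :=
  (refine_exists hperf Q hε).choose_spec.choose

lemma rmap_spec (Q : PartX X) {ε : ℝ} (hε : 0 < ε) :
    1 ≤ arity hperf Q hε ∧
    (∀ i b, IsClopen (rmap hperf Q hε i b)) ∧ (∀ i b, (rmap hperf Q hε i b).Nonempty) ∧
    (∀ i b, diam (rmap hperf Q hε i b) ≤ ε) ∧ (∀ i b, rmap hperf Q hε i b ⊆ Q.P i) ∧
    (∀ i (b b' : Fin (arity hperf Q hε) → Bool), b ≠ b' →
      Disjoint (rmap hperf Q hε i b) (rmap hperf Q hε i b')) ∧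
    (∀ i x, x ∈ Q.P i → ∃ b, x ∈ rmap hperf Q hε i b) :=
  (refine_exists hperf Q hε).choose_spec.choose_spec

noncomputable def refinePart (Q : PartX X) {ε : ℝ} (hε : 0 < ε) : PartX X where
  ι := Q.ι × (Fin (arity hperf Q hε) → Bool)
  fin := inferInstance
  P := fun p => rmap hperf Q hε p.1 p.2
  clopen := fun p => (rmap_spec hperf Q hε).2.1 p.1 p.2
  ne := fun p => (rmap_spec hperf Q hε).2.2.1 p.1 p.2
  disj := by
    rintro ⟨i, b⟩ ⟨j, c⟩ hne
    rcases eq_or_ne i j with rfl | hij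
    · have hbc : b ≠ c := fun h => hne (by rw [h])
      exact (rmap_spec hperf Q hε).2.2.2.2.2.1 i b c hbc
    · exact (Q.disj i j hij).mono ((rmap_spec hperf Q hε).2.2.2.2.1 i b)
        ((rmap_spec hperf Q hε).2.2.2.2.1 j c)
  cover := by
    intro x
    obtain ⟨i, hi⟩ := Q.cover x
    obtain ⟨b, hb⟩ := (rmap_spec hperf Q hε).2.2.2.2.2.2 i x hi
    exact ⟨(i, b), hb⟩

variable (X) in
noncomputable def basePart [Nonempty X] : PartX X where
  ι := PUnit
  fin := inferInstance
  P := fun _ => univ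
  clopen := fun _ => isClopen_univ
  ne := fun _ => univ_nonempty
  disj := fun i j h => absurd (by cases i; cases j; rfl) h
  cover := fun x => ⟨PUnit.unit, mem_univ x⟩

lemma eps_pos (j : ℕ) : (0 : ℝ) < 1 / (j + 1) := by positivity

variable [Nonempty X]

noncomputable def chain : ℕ → PartX X :=
  fun m => Nat.rec (basePart X) (fun j Q => refinePart hperf Q (eps_pos j)) m

noncomputable def nj (j : ℕ) : ℕ := arity hperf (chain hperf j) (eps_pos j)

noncomputable def idx (b : ∀ i, Fin (nj hperf i) → Bool) : (j : ℕ) → (chain hperf j).ι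
  | 0 => PUnit.unit
  | j + 1 => ((idx b j, b j) : (chain hperf j).ι × (Fin (nj hperf j) → Bool))

noncomputable def Cs (b : ∀ i, Fin (nj hperf i) → Bool) (j : ℕ) : Set X :=
  (chain hperf j).P (idx hperf b j)

lemma Cs_succ (b : ∀ i, Fin (nj hperf i) → Bool) (j : ℕ) :
    Cs hperf b (j + 1) = rmap hperf (chain hperf j) (eps_pos j) (idx hperf b j) (b j) := rfl

lemma Cs_sub (b : ∀ i, Fin (nj hperf i) → Bool) (j : ℕ) :
    Cs hperf b (j + 1) ⊆ Cs hperf b j := by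
  rw [Cs_succ]
  exact (rmap_spec hperf (chain hperf j) (eps_pos j)).2.2.2.2.1 _ _

lemma Cs_diam (b : ∀ i, Fin (nj hperf i) → Bool) (j : ℕ) :
    diam (Cs hperf b (j + 1)) ≤ 1 / (j + 1) := by
  rw [Cs_succ]
  exact (rmap_spec hperf (chain hperf j) (eps_pos j)).2.2.2.1 _ _

lemma Cs_ne (b : ∀ i, Fin (nj hperf i) → Bool) (j : ℕ) : (Cs hperf b j).Nonempty :=
  (chain hperf j).ne _

lemma Cs_closed (b : ∀ i, Fin (nj hperf i) → Bool) (j : ℕ) : IsClosed (Cs hperf b j) :=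
  ((chain hperf j).clopen _).isClosed

lemma Cs_iInter_ne (b : ∀ i, Fin (nj hperf i) → Bool) :
    (⋂ j, Cs hperf b j).Nonempty :=
  IsCompact.nonempty_iInter_of_sequence_nonempty_isCompact_isClosed _
    (Cs_sub hperf b) (Cs_ne hperf b) ((Cs_closed hperf b 0).isCompact)
    (Cs_closed hperf b)

lemma Cs_unique (b : ∀ i, Fin (nj hperf i) → Bool) {x y : X}
    (hx : ∀ j, x ∈ Cs hperf b j) (hy : ∀ j, y ∈ Cs hperf b j) : x = y := by
  have hd : ∀ j : ℕ, dist x y ≤ 1 / (j + 1) := fun j =>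
    le_trans (dist_le_diam_of_mem isBounded_of_compactSpace (hx (j + 1)) (hy (j + 1)))
      (Cs_diam hperf b j)
  rw [← dist_le_zero]
  by_contra h
  push_neg at h
  obtain ⟨j, hj⟩ := exists_nat_one_div_lt h
  exact absurd (hd j) (not_le.2 hj)

noncomputable def gmap (b : ∀ i, Fin (nj hperf i) → Bool) : X :=
  (Cs_iInter_ne hperf b).some

lemma gmap_mem (b : ∀ i, Fin (nj hperf i) → Bool) (j : ℕ) :
    gmap hperf b ∈ Cs hperf b j :=
  mem_iInter.1 (Cs_iInter_ne hperf b).some_mem j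

lemma gmap_inj : Function.Injective (gmap hperf) := by
  intro b b' h
  by_contra hne
  obtain ⟨j, hj⟩ : ∃ j, b j ≠ b' j := by
    by_contra h'
    push_neg at h'
    exact hne (funext h')
  have hij : idx hperf b (j + 1) ≠ idx hperf b' (j + 1) := fun he =>
    hj (congrArg Prod.snd he)
  have hd := (chain hperf (j + 1)).disj _ _ hij
  exact Set.disjoint_left.1 hd (gmap_mem hperf b (j + 1))
    (h ▸ gmap_mem hperf b' (j + 1))

lemma gmap_surj : Function.Surjective (gmap hperf) := by
  intro x
  have step : ∀ j (i : (chain hperf j).ι), x ∈ (chain hperf j).P i →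
      ∃ c : Fin (nj hperf j) → Bool, x ∈ (chain hperf (j + 1)).P (i, c) := fun j i hi =>
    (rmap_spec hperf (chain hperf j) (eps_pos j)).2.2.2.2.2.2 i x hi
  let sel : ∀ j : ℕ, {i : (chain hperf j).ι // x ∈ (chain hperf j).P i} :=
    fun j => Nat.rec ⟨PUnit.unit, mem_univ x⟩
      (fun j ih => ⟨(ih.1, (step j ih.1 ih.2).choose), (step j ih.1 ih.2).choose_spec⟩) j
  set b : ∀ i, Fin (nj hperf i) → Bool := fun i => (sel (i + 1)).1.2 with hb
  have hidx : ∀ j, idx hperf b j = (sel j).1 := by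
    intro j
    induction j with
    | zero => rfl
    | succ j ih =>
      show ((idx hperf b j, b j) : (chain hperf j).ι × (Fin (nj hperf j) → Bool)) = (sel (j+1)).1
      rw [ih]
      rfl
  have hmem : ∀ j, x ∈ Cs hperf b j := fun j => by
    rw [Cs, hidx]
    exact (sel j).2
  exact ⟨b, Cs_unique hperf b (gmap_mem hperf b) hmem⟩

lemma gmap_cont : Continuous (gmap hperf) := by
  rw [continuous_iff_continuousAt]
  intro b
  rw [ContinuousAt, Metric.tendsto_nhds]
  intro ε hε
  obtain ⟨j, hj⟩ := exists_nat_one_div_lt hε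
  have hidx_agree : ∀ (m : ℕ) (b' : ∀ i, Fin (nj hperf i) → Bool),
      (∀ i < m, b' i = b i) → idx hperf b' m = idx hperf b m := by
    intro m
    induction m with
    | zero => intro b' _; rfl
    | succ m ih =>
      intro b' hb'
      show ((idx hperf b' m, b' m) : (chain hperf m).ι × (Fin (nj hperf m) → Bool))
        = (idx hperf b m, b m)
      rw [ih b' (fun i hi => hb' i (Nat.lt_succ_of_lt hi)), hb' m (Nat.lt_succ_self m)]
  have hev : ∀ᶠ b' in 𝓝 b, ∀ i ∈ Finset.range (j + 1),
      b' i = b i := by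
    rw [Filter.eventually_all_finset]
    intro i _
    have hopen : IsOpen {b' : ∀ i, Fin (nj hperf i) → Bool | b' i = b i} := by
      have : {b' : ∀ i, Fin (nj hperf i) → Bool | b' i = b i}
          = (fun b' : ∀ i, Fin (nj hperf i) → Bool => b' i) ⁻¹' {b i} := by
        ext b'
        simp
      rw [this]
      exact (continuous_apply i).isOpen_preimage _ (isOpen_discrete _)
    exact hopen.mem_nhds rfl
  filter_upwards [hev] with b' hb'
  have h1 : gmap hperf b' ∈ Cs hperf b (j + 1) := by
    rw [Cs, ← hidx_agree (j + 1) b' (fun i hi => hb' i (Finset.mem_range.2 hi))]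
    exact gmap_mem hperf b' (j + 1)
  calc dist (gmap hperf b') (gmap hperf b) ≤ diam (Cs hperf b (j + 1)) :=
        dist_le_diam_of_mem isBounded_of_compactSpace h1 (gmap_mem hperf b (j + 1))
    _ ≤ 1 / (j + 1) := Cs_diam hperf b j
    _ < ε := hj

end BrouwerCantorAux

section Reindex

/-- Reindexing: the Cantor space is homeomorphic to any countable product of
nontrivial finite Cantor-like cubes. -/
noncomputable def cantorReindex (n : ℕ → ℕ) (hn : ∀ j, 1 ≤ n j) :
    (ℕ → Bool) ≃ₜ ∀ j, Fin (n j) → Bool := by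
  haveI : Infinite (Σ j, Fin (n j)) :=
    Infinite.of_injective (fun j : ℕ => (⟨j, ⟨0, hn j⟩⟩ : Σ j, Fin (n j)))
      (fun a b h => congrArg Sigma.fst h)
  haveI := Denumerable.ofEncodableOfInfinite (Σ j, Fin (n j))
  let e0 : (Σ j, Fin (n j)) ≃ ℕ := Denumerable.eqv _
  let h1 : ((Σ j, Fin (n j)) → Bool) ≃ₜ (ℕ → Bool) :=
    Homeomorph.piCongrLeft (Y := fun _ : ℕ => Bool) e0
  let h2 : ((Σ j, Fin (n j)) → Bool) ≃ₜ ∀ j, Fin (n j) → Bool :=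
    { toEquiv := Equiv.piCurry (fun _ _ => Bool)
      continuous_toFun := continuous_pi fun j => continuous_pi fun i =>
        continuous_apply (⟨j, i⟩ : Σ j, Fin (n j))
      continuous_invFun := continuous_pi fun p =>
        (continuous_apply p.2).comp (continuous_apply p.1) }
  exact h1.symm.trans h2

end Reindex


/-- Brouwer: A nonempty, compact, metrizable, totally disconnected,
perfect (no isolated points) topological space is homeomorphic to the Cantor space
`{0,1}^ℕ`. -/
theorem brouwer_cantor_characterization
    (X : Type*) [TopologicalSpace X] [Nonempty X] [CompactSpace X]
    [TopologicalSpace.MetrizableSpace X] [TotallyDisconnectedSpace X]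
    (hperf : ∀ x : X, Filter.NeBot (nhdsWithin x {x}ᶜ)) :
    Nonempty (X ≃ₜ (ℕ → Bool)) := by
  letI : MetricSpace X := TopologicalSpace.metrizableSpaceMetric X
  have hperf' : ∀ x : X, (𝓝[≠] x).NeBot := hperf
  have hn : ∀ j, 1 ≤ BrouwerCantorAux.nj hperf' j := fun j =>
    (BrouwerCantorAux.rmap_spec hperf' (BrouwerCantorAux.chain hperf' j)
      (BrouwerCantorAux.eps_pos j)).1
  let f : (∀ j, Fin (BrouwerCantorAux.nj hperf' j) → Bool) ≃ X :=
    Equiv.ofBijective _ ⟨BrouwerCantorAux.gmap_inj hperf', BrouwerCantorAux.gmap_surj hperf'⟩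
  have hf : Continuous f := BrouwerCantorAux.gmap_cont hperf'
  let e1 : (∀ j, Fin (BrouwerCantorAux.nj hperf' j) → Bool) ≃ₜ X :=
    Continuous.homeoOfEquivCompactToT2 hf
  exact ⟨e1.symm.trans (cantorReindex _ hn).symm⟩
end

section
/- The inverse limit of the sequence in which every space is the circle S¹ and every bonding map is the double covering z ↦ z² is a nonempty compact connected topological space that is not path-connected. -/
open Complex Set

noncomputable section

namespace DyadicSolenoidAux

/-- min is 1-Lipschitz in second argument -/
lemma abs_min_sub_min (t x y : ℝ) : |min t x - min t y| ≤ |x - y| := by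
  rcases le_total t x with h1 | h1 <;> rcases le_total t y with h2 | h2 <;>
    rw [abs_le] <;> constructor <;>
    simp only [min_eq_left, min_eq_right, h1, h2] <;>
    cases abs_cases (x - y) <;> linarith [le_abs_self (x - y), neg_abs_le (x - y)]

lemma ratio_mem_slitPlane {z w : Circle} (h : dist (z : ℂ) (w : ℂ) < 2) :
    ((z / w : Circle) : ℂ) ∈ slitPlane := by
  by_contra hc
  rw [Complex.mem_slitPlane_iff, not_or, not_lt, not_ne_iff] at hc
  obtain ⟨hre, him⟩ := hc
  set u : ℂ := ((z / w : Circle) : ℂ) with hu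
  have habs : ‖u‖ = 1 := Circle.norm_coe _
  have hureal : u = (u.re : ℂ) := Complex.ext rfl (by simp [him])
  have : |u.re| = 1 := by
    rw [hureal] at habs; rwa [Complex.norm_real, Real.norm_eq_abs] at habs
  have hre1 : u.re = -1 := by cases abs_cases u.re <;> linarith
  have hu1 : u = -1 := by rw [hureal, hre1]; norm_num
  have hzw : (z : ℂ) = -(w : ℂ) := by
    have hw : (w : ℂ) ≠ 0 := Circle.coe_ne_zero w
    have : (z : ℂ) / (w : ℂ) = -1 := by rw [← Circle.coe_div, ← hu, hu1]
    field_simp at this; linear_combination this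
  rw [Complex.dist_eq, hzw] at h
  have : ‖(-(w:ℂ) - w)‖ = 2 := by
    have : -(w:ℂ) - w = (-2) * w := by ring
    rw [this, norm_mul, Circle.norm_coe]; simp
  linarith

lemma exp_sum (s : Finset ℕ) (a : ℕ → ℝ) :
    Circle.exp (∑ i ∈ s, a i) = ∏ i ∈ s, Circle.exp (a i) := by
  classical
  induction s using Finset.cons_induction with
  | empty => simp [Circle.exp_zero]
  | cons i s hi ih => rw [Finset.sum_cons, Finset.prod_cons, Circle.exp_add, ih]

lemma circle_exp_nat_mul (x : ℝ) : ∀ k : ℕ, Circle.exp x ^ k = Circle.exp (k * x)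
  | 0 => by simp [Circle.exp_zero]
  | (k + 1) => by
      rw [pow_succ, circle_exp_nat_mul x k, ← Circle.exp_add]
      congr 1; push_cast; ring

/-- Path lifting for uniformly continuous maps into the circle, on `[0,1]`. -/
lemma exists_lift (f : ℝ → Circle) (hf : UniformContinuous f) :
    ∃ g : ℝ → ℝ, Continuous g ∧ g 0 = 0 ∧
      ∀ t ∈ Icc (0 : ℝ) 1, f t = f 0 * Circle.exp (g t) := by
  obtain ⟨δ, δpos, hδ⟩ := Metric.uniformContinuous_iff.mp hf 2 two_pos
  obtain ⟨N, hN⟩ := exists_nat_one_div_lt δpos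
  set M : ℝ := (N : ℝ) + 1 with hM
  have hMpos : 0 < M := by positivity
  set c : ℝ → ℕ → Circle := fun t k => f (min t (k / M)) with hc
  set r : ℝ → ℕ → Circle := fun t k => c t (k + 1) / c t k with hr
  have hdist : ∀ t k, dist ((c t (k+1) : Circle) : ℂ) ((c t k : Circle) : ℂ) < 2 := by
    intro t k
    apply hδ
    have h1 : dist (min t (((k:ℕ)+1 : ℕ) / M)) (min t ((k:ℕ) / M)) ≤ 1 / M := by
      rw [Real.dist_eq]
      refine (abs_min_sub_min t _ _).trans ?_
      have : ((((k:ℕ)+1 : ℕ)) : ℝ) / M - ((k:ℕ) : ℝ) / M = 1 / M := by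
        push_cast; field_simp; ring
      rw [this, abs_of_pos (by positivity)]
    exact lt_of_le_of_lt h1 hN
  have hslit : ∀ t k, ((r t k : Circle) : ℂ) ∈ slitPlane := by
    intro t k
    exact ratio_mem_slitPlane (hdist t k)
  set g : ℝ → ℝ := fun t => ∑ k ∈ Finset.range (N + 1), Complex.arg ((r t k : Circle) : ℂ)
    with hg
  have hcont : Continuous g := by
    apply continuous_finset_sum
    intro k _
    rw [continuous_iff_continuousAt]
    intro t
    have hrc : Continuous fun t => r t k :=
      Continuous.div' (hf.continuous.comp (continuous_id.min continuous_const))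
        (hf.continuous.comp (continuous_id.min continuous_const))
    have hcoe : Continuous fun z : Circle => (z : ℂ) := continuous_induced_dom
    have hinner : Continuous fun t => ((r t k : Circle) : ℂ) := hcoe.comp hrc
    exact ContinuousAt.comp (g := Complex.arg)
      (Complex.continuousAt_arg (hslit t k)) hinner.continuousAt
  refine ⟨g, hcont, ?_, ?_⟩
  · rw [hg]
    apply Finset.sum_eq_zero
    intro k _
    have h1 : min (0:ℝ) (((k:ℕ)+1 : ℕ) / M) = 0 := min_eq_left (by positivity)
    have h2 : min (0:ℝ) ((k:ℕ) / M) = 0 := min_eq_left (by positivity)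
    simp only [hr, hc, h1, h2]
    simp [Complex.arg_one]
  · intro t ht
    have key : Circle.exp (g t) = f t / f 0 := by
      rw [hg, exp_sum]
      have : ∀ k ∈ Finset.range (N+1), Circle.exp (Complex.arg ((r t k : Circle) : ℂ))
          = r t k := fun k _ => Circle.exp_arg _
      rw [Finset.prod_congr rfl this]
      rw [hr]
      rw [Finset.prod_range_div (fun k => c t k) (N+1)]
      have h1 : c t (N+1) = f t := by
        have : ((N+1 : ℕ) : ℝ) / M = 1 := by push_cast; field_simp; exact hM.symm
        simp only [hc, this, min_eq_left ht.2]
      have h2 : c t 0 = f 0 := by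
        have : ((0 : ℕ) : ℝ) / M = 0 := by simp
        simp only [hc, this, min_eq_right ht.1]
      rw [h1, h2]
    rw [key]
    apply Subtype.ext
    push_cast
    field_simp

lemma thread_pow {z : ℕ → Circle} (hz : ∀ n, (z (n + 1)) ^ 2 = z n) :
    ∀ m n, z n = (z (n + m)) ^ (2 ^ m) := by
  intro m
  induction m with
  | zero => intro n; simp
  | succ m ih =>
    intro n
    rw [ih n, ← hz (n + m)]
    rw [← pow_mul]
    ring_nf

/-- Main path rigidity: coordinates of a path in the solenoid move by `exp (g t / 2^n)`. -/
lemma thread_path (p : ℝ → ℕ → Circle)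
    (hcont : ∀ n, Continuous fun t => p t n)
    (hsq : ∀ t n, (p t (n + 1)) ^ 2 = p t n)
    (g : ℝ → ℝ) (hg : Continuous g) (hg0 : g 0 = 0)
    (h0 : ∀ t ∈ Icc (0:ℝ) 1, p t 0 = p 0 0 * Circle.exp (g t)) :
    ∀ n, ∀ t ∈ Icc (0:ℝ) 1, p t n = p 0 n * Circle.exp (g t / 2 ^ n) := by
  intro n
  induction n with
  | zero => intro t ht; simpa using h0 t ht
  | succ n ih =>
    set H : ℝ → Circle := fun t =>
      p t (n+1) * (p 0 (n+1))⁻¹ * (Circle.exp (g t / 2 ^ (n+1)))⁻¹ with hH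
    have Hcont : Continuous H := by
      apply Continuous.mul
      apply Continuous.mul (hcont (n+1)) continuous_const
      exact ((map_continuous Circle.exp).comp (hg.div_const _)).inv
    have Hsq : ∀ t ∈ Icc (0:ℝ) 1, (H t) ^ 2 = 1 := by
      intro t ht
      have hexp2 : (Circle.exp (g t / 2 ^ (n+1))) ^ 2 = Circle.exp (g t / 2 ^ n) := by
        rw [sq, ← Circle.exp_add]
        congr 1
        field_simp
        ring
      have : (H t) ^ 2 = p t n * (p 0 n)⁻¹ * (Circle.exp (g t / 2 ^ n))⁻¹ := by
        rw [hH]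
        simp only [mul_pow, inv_pow]
        rw [hsq t n, hsq 0 n, hexp2]
      rw [this, ih t ht]
      rw [mul_assoc, mul_mul_mul_comm]
      simp
    have H0 : H 0 = 1 := by
      rw [hH]; simp [hg0, Circle.exp_zero]
    have Hval : ∀ t ∈ Icc (0:ℝ) 1, ((H t : Circle) : ℂ) = 1 ∨ ((H t : Circle) : ℂ) = -1 := by
      intro t ht
      have h2 : ((H t : Circle) : ℂ) ^ 2 = 1 := by
        rw [sq, ← Circle.coe_mul, ← sq, Hsq t ht, Circle.coe_one]
      have : (((H t : Circle) : ℂ) - 1) * (((H t : Circle) : ℂ) + 1) = 0 := by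
        linear_combination h2
      rcases mul_eq_zero.mp this with h | h
      · left; linear_combination h
      · right; linear_combination h
    -- constancy via connectedness of [0,1]
    have hRe : ∀ t ∈ Icc (0:ℝ) 1, ((H t : Circle) : ℂ).re = 1 := by
      by_contra hcon
      push_neg at hcon
      obtain ⟨t₀, ht₀, hne⟩ := hcon
      have hcoe : Continuous fun z : Circle => (z : ℂ) := continuous_induced_dom
      have hRcont : ContinuousOn (fun t => ((H t : Circle) : ℂ).re) (Icc 0 1) :=
        (Complex.continuous_re.comp (hcoe.comp Hcont)).continuousOn
      have hS : IsPreconnected ((fun t => ((H t : Circle) : ℂ).re) '' Icc 0 1) :=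
        (isPreconnected_Icc).image _ hRcont
      have h1S : (1:ℝ) ∈ (fun t => ((H t : Circle) : ℂ).re) '' Icc 0 1 :=
        ⟨0, ⟨le_refl 0, zero_le_one⟩, by show ((H 0 : Circle) : ℂ).re = 1; rw [H0]; simp⟩
      have hRt₀ : ((H t₀ : Circle) : ℂ).re = -1 := by
        rcases Hval t₀ ht₀ with h | h
        · exact absurd (by rw [h]; simp : ((H t₀ : Circle) : ℂ).re = 1) hne
        · rw [h]; simp
      have hm1S : (-1:ℝ) ∈ (fun t => ((H t : Circle) : ℂ).re) '' Icc 0 1 := ⟨t₀, ht₀, hRt₀⟩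
      have h0S : (0:ℝ) ∈ (fun t => ((H t : Circle) : ℂ).re) '' Icc 0 1 :=
        hS.Icc_subset hm1S h1S ⟨by norm_num, by norm_num⟩
      obtain ⟨t₁, ht₁, hRt₁⟩ := h0S
      have hRt₁' : ((H t₁ : Circle) : ℂ).re = 0 := hRt₁
      rcases Hval t₁ ht₁ with h | h <;> rw [h] at hRt₁' <;> simp at hRt₁'
    intro t ht
    have hH1 : H t = 1 := by
      rcases Hval t ht with h | h
      · exact Subtype.ext (by rw [h]; simp)
      · exfalso
        have := hRe t ht
        rw [h] at this
        norm_num at this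
    have : H t * p 0 (n+1) * Circle.exp (g t / 2 ^ (n+1)) = p t (n+1) := by
      rw [hH]
      simp [mul_assoc, mul_comm, mul_left_comm]
    rw [hH1, one_mul] at this
    exact this.symm

/-- The sequence of numerators: `u n = ∑_{k < n, k even} 2^k`. -/
def u (n : ℕ) : ℕ := ∑ k ∈ Finset.range n, if Even k then 2 ^ k else 0

lemma u_succ (n : ℕ) : u (n + 1) = u n + if Even n then 2 ^ n else 0 :=
  Finset.sum_range_succ _ n

lemma u_bound : ∀ n, 3 * u n + 1 ≤ 2 ^ (n + 1) ∧ (Even n → 3 * u n + 1 ≤ 2 ^ n) := by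
  intro n
  induction n with
  | zero => simp [u]
  | succ n ih =>
    obtain ⟨h1, h2⟩ := ih
    rcases Nat.even_or_odd n with he | ho
    · have hu : u (n+1) = u n + 2 ^ n := by rw [u_succ, if_pos he]
      constructor
      · rw [hu]
        have := h2 he
        have : 3 * (u n + 2^n) + 1 = (3 * u n + 1) + 3 * 2^n := by ring
        rw [this]
        calc (3 * u n + 1) + 3 * 2^n ≤ 2^n + 3 * 2^n := by
              have := h2 he; omega
        _ = 2 ^ (n + 2) := by ring
      · intro hev
        exfalso
        rw [Nat.even_add_one] at hev
        exact hev he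
    · have hu : u (n+1) = u n := by
        rw [u_succ, if_neg (Nat.not_even_iff_odd.mpr ho), add_zero]
      constructor
      · rw [hu]
        calc 3 * u n + 1 ≤ 2 ^ (n+1) := h1
        _ ≤ 2 ^ (n+2) := Nat.pow_le_pow_right (by norm_num) (by omega)
      · intro _
        rw [hu]
        exact h1

lemma u_lt (n : ℕ) : u n < 2 ^ n := by
  have h := (u_bound n).1
  have h2 : 2 ^ (n+1) = 2 * 2 ^ n := by ring
  omega

lemma u_even_bound {n : ℕ} (hn : Even n) : 3 * u n + 1 ≤ 2 ^ n := (u_bound n).2 hn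

lemma u_add_two {n : ℕ} (hn : Even n) : u (n + 2) = u n + 2 ^ n := by
  have h1 : ¬ Even (n + 1) := by simp [Nat.even_add_one, hn]
  rw [u_succ, u_succ, if_pos hn, if_neg h1, add_zero]

end DyadicSolenoidAux

open DyadicSolenoidAux

/-- The dyadic solenoid (inverse limit of circles under `z ↦ z²`) is
a nonempty compact connected topological space that is not path-connected. -/
theorem dyadic_solenoid_properties :
    Nonempty {z : ℕ → Circle // ∀ n, (z (n + 1)) ^ 2 = z n} ∧
    CompactSpace {z : ℕ → Circle // ∀ n, (z (n + 1)) ^ 2 = z n} ∧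
    ConnectedSpace {z : ℕ → Circle // ∀ n, (z (n + 1)) ^ 2 = z n} ∧
    ¬ PathConnectedSpace {z : ℕ → Circle // ∀ n, (z (n + 1)) ^ 2 = z n} := by
  set S := {z : ℕ → Circle // ∀ n, (z (n + 1)) ^ 2 = z n} with hS
  have hone : ∀ n : ℕ, ((1 : Circle) ^ 2 : Circle) = 1 := fun _ => one_pow 2
  have hne : Nonempty S := ⟨⟨fun _ => 1, fun _ => one_pow 2⟩⟩
  -- Compactness
  have hclosed : IsClosed {z : ℕ → Circle | ∀ n, (z (n + 1)) ^ 2 = z n} := by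
    have : {z : ℕ → Circle | ∀ n, (z (n + 1)) ^ 2 = z n}
        = ⋂ n, {z : ℕ → Circle | (z (n + 1)) ^ 2 = z n} := by
      ext z; simp [Set.mem_iInter]
    rw [this]
    exact isClosed_iInter fun n =>
      isClosed_eq ((continuous_apply (n+1)).pow 2) (continuous_apply n)
  have hcompact : CompactSpace S := isCompact_iff_compactSpace.mp hclosed.isCompact
  -- The one-parameter family
  have hTmem : ∀ d : ℝ, ∀ n, (Circle.exp (d / 2 ^ (n+1))) ^ 2 = Circle.exp (d / 2 ^ n) := by
    intro d n
    rw [sq, ← Circle.exp_add]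
    congr 1
    field_simp
    ring
  set T : ℝ → S := fun d => ⟨fun n => Circle.exp (d / 2 ^ n), fun n => hTmem d n⟩ with hT
  have hTcont : Continuous T := by
    apply Continuous.subtype_mk
    exact continuous_pi fun n => (map_continuous Circle.exp).comp (continuous_id.div_const _)
  -- Density of the range of T
  have hdense : DenseRange T := by
    rw [DenseRange, dense_iff_inter_open]
    intro U hU hUne
    obtain ⟨z, hz⟩ := hUne
    obtain ⟨V, hV, rfl⟩ := isOpen_induced_iff.mp hU
    have hzV : (z : ℕ → Circle) ∈ V := hz
    obtain ⟨I, w, hw, hsub⟩ := isOpen_pi_iff.mp hV _ hzV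
    set N : ℕ := I.sup id with hN
    obtain ⟨r, hrexp⟩ : ∃ r : ℝ, Circle.exp r = (z : ℕ → Circle) N :=
      ⟨Complex.arg ((z : ℕ → Circle) N : ℂ), Circle.exp_arg _⟩
    set d : ℝ := 2 ^ N * r with hd
    have hagree : ∀ a ∈ I, (T d : ℕ → Circle) a = (z : ℕ → Circle) a := by
      intro a ha
      have haN : a ≤ N := Finset.le_sup (f := id) ha
      have hz_pow : (z : ℕ → Circle) a = ((z : ℕ → Circle) (a + (N - a))) ^ (2 ^ (N - a)) :=
        thread_pow z.2 (N - a) a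
      rw [Nat.add_sub_cancel' haN] at hz_pow
      have hT_val : (T d : ℕ → Circle) a = Circle.exp (d / 2 ^ a) := rfl
      have hpow2 : (2:ℝ) ^ (N - a) * 2 ^ a = 2 ^ N := by
        rw [← pow_add, Nat.sub_add_cancel haN]
      have harg : d / 2 ^ a = (2 ^ (N - a) : ℕ) * r := by
        rw [hd]
        push_cast
        rw [← hpow2]
        field_simp
      rw [hT_val, harg, ← circle_exp_nat_mul, hrexp, hz_pow]
    refine ⟨T d, ?_, Set.mem_range_self d⟩
    apply hsub
    intro a ha
    rw [hagree a ha]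
    exact (hw a ha).2
  have hpreconn : PreconnectedSpace S := hdense.preconnectedSpace hTcont
  have hconn : ConnectedSpace S := { toPreconnectedSpace := hpreconn, toNonempty := hne }
  refine ⟨hne, hcompact, hconn, ?_⟩
  -- Non-path-connectedness
  intro hPC
  -- the bad thread
  have hbmem : ∀ n, (Circle.exp (2 * Real.pi * (u (n+1)) / 2 ^ (n+1))) ^ 2
      = Circle.exp (2 * Real.pi * (u n) / 2 ^ n) := by
    intro n
    rw [sq, ← Circle.exp_add]
    rcases Nat.even_or_odd n with he | ho
    · have hu : (u (n+1) : ℝ) = u n + 2 ^ n := by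
        rw [u_succ, if_pos he]; push_cast; ring
      have harg : 2 * Real.pi * (u (n+1)) / 2 ^ (n+1) + 2 * Real.pi * (u (n+1)) / 2 ^ (n+1)
          = 2 * Real.pi * (u n) / 2 ^ n + 2 * Real.pi := by
        rw [hu]
        field_simp
        ring
      rw [harg, Circle.exp_add_two_pi]
    · have hu : (u (n+1) : ℝ) = u n := by
        rw [u_succ, if_neg (Nat.not_even_iff_odd.mpr ho), add_zero]
      congr 1
      rw [hu]
      field_simp
      ring
  set b : S := ⟨fun n => Circle.exp (2 * Real.pi * (u n) / 2 ^ n), fun n => hbmem n⟩ with hb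
  set one : S := ⟨fun _ => 1, fun _ => one_pow 2⟩ with hone'
  obtain ⟨γ⟩ : Nonempty (Path one b) := PathConnectedSpace.joined one b
  set p : ℝ → ℕ → Circle := fun t => (γ.extend t : ℕ → Circle) with hp
  have hpcont : ∀ n, Continuous fun t => p t n :=
    fun n => (continuous_apply n).comp (continuous_subtype_val.comp γ.continuous_extend)
  have hpsq : ∀ t n, (p t (n + 1)) ^ 2 = p t n := fun t n => (γ.extend t).2 n
  have hp0 : p 0 = fun _ => 1 := by
    rw [hp]
    simp only [Path.extend_zero]
    rfl

  have hp1 : p 1 = fun n => Circle.exp (2 * Real.pi * (u n) / 2 ^ n) := by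
    rw [hp]
    simp only [Path.extend_one]
    rfl

  -- lift of coordinate 0
  have hfU : UniformContinuous fun t => p t 0 := by
    have heq : (fun t => p t 0)
        = (fun s : unitInterval => ((γ s : ℕ → Circle) 0)) ∘ Set.projIcc 0 1 zero_le_one := by
      funext t
      rfl
    rw [heq]
    apply UniformContinuous.comp
    · apply CompactSpace.uniformContinuous_of_continuous
      exact (continuous_apply 0).comp (continuous_subtype_val.comp γ.continuous)
    · exact (LipschitzWith.projIcc zero_le_one).uniformContinuous
  obtain ⟨g, hgcont, hg0, hglift⟩ := exists_lift (fun t => p t 0) hfU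
  have hkey := thread_path p hpcont hpsq g hgcont hg0 (by
    intro t ht
    exact hglift t ht)
  -- evaluate at t = 1
  have hfinal : ∀ n, Circle.exp (2 * Real.pi * (u n) / 2 ^ n) = Circle.exp (g 1 / 2 ^ n) := by
    intro n
    have := hkey n 1 ⟨zero_le_one, le_refl 1⟩
    rw [hp0, hp1] at this
    simpa using this
  -- extract integer equations
  have hπ : (2 * Real.pi) ≠ 0 := by positivity
  have hint : ∀ n, ∃ m : ℤ, 2 * Real.pi * (u n) / 2 ^ n = g 1 / 2 ^ n + m * (2 * Real.pi) :=
    fun n => Circle.exp_eq_exp.mp (hfinal n)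
  obtain ⟨m0, hm0⟩ := hint 0
  have hu0 : (u 0 : ℝ) = 0 := by simp [u]
  obtain ⟨e, hd⟩ : ∃ e : ℤ, g 1 = (e : ℝ) * (2 * Real.pi) := by
    refine ⟨-m0, ?_⟩
    rw [hu0] at hm0
    push_cast
    simp at hm0
    linarith
  have hinteq : ∀ n : ℕ, ∃ m : ℤ, (u n : ℤ) - e = m * 2 ^ n := by
    intro n
    obtain ⟨m, hm⟩ := hint n
    refine ⟨m, ?_⟩
    have h2n : ((2:ℝ) ^ n) ≠ 0 := by positivity
    have hreal : (u n : ℝ) - (e : ℝ) = (m : ℝ) * 2 ^ n := by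
      have hm2 : 2 * Real.pi * (u n : ℝ) = g 1 + m * (2 * Real.pi) * 2 ^ n := by
        field_simp at hm
        linarith
      rw [hd] at hm2
      have h2 : (2 * Real.pi) * ((u n : ℝ) - (e : ℝ)) = (2 * Real.pi) * ((m : ℝ) * 2 ^ n) := by
        linear_combination hm2
      have h3 := mul_left_cancel₀ hπ h2
      linarith
    exact_mod_cast hreal
  -- derive contradiction
  rcases le_or_gt 0 e with hepos | heneg
  · -- e ≥ 0 : u n = e for two successive even levels
    have hval : ∀ n : ℕ, (e < 2 ^ n) → (u n : ℤ) = e := by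
      intro n h2
      obtain ⟨m, hm⟩ := hinteq n
      have hub : (u n : ℤ) < 2 ^ n := by exact_mod_cast u_lt n
      have hpow : (0:ℤ) < 2 ^ n := by positivity
      have : m = 0 := by nlinarith [Int.ofNat_nonneg (u n)]
      rw [this] at hm
      linarith
    set n₀ : ℕ := 2 * e.toNat + 2 with hn₀
    have heven : Even n₀ := ⟨e.toNat + 1, by omega⟩
    have h2big : e < 2 ^ n₀ := by
      have h1 : e ≤ (e.toNat : ℤ) := Int.self_le_toNat e
      have h2 : (e.toNat : ℤ) < 2 ^ e.toNat := by exact_mod_cast Nat.lt_two_pow_self (n := e.toNat)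
      have h3 : (2:ℤ) ^ e.toNat ≤ 2 ^ n₀ := pow_le_pow_right₀ (by norm_num) (by omega)
      omega
    have h2big2 : e < 2 ^ (n₀ + 2) := by
      have : (2:ℤ) ^ n₀ ≤ 2 ^ (n₀ + 2) := pow_le_pow_right₀ (by norm_num) (by omega)
      omega
    have heq1 := hval n₀ h2big
    have heq2 := hval (n₀ + 2) h2big2
    have hstep : u (n₀ + 2) = u n₀ + 2 ^ n₀ := u_add_two heven
    rw [hstep] at heq2
    push_cast at heq2
    have hpow : (0:ℤ) < 2 ^ n₀ := by positivity
    omega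
  · -- e < 0 : then 0 < u n - e < 2^n for large even n
    set K : ℕ := 3 * e.natAbs + 3 with hK
    set n₁ : ℕ := 2 * K with hn₁
    have heven : Even n₁ := ⟨K, by omega⟩
    obtain ⟨m, hm⟩ := hinteq n₁
    have hbig : (3 * e.natAbs + 3 : ℤ) ≤ 2 ^ n₁ := by
      have h2 : (K : ℤ) < 2 ^ K := by exact_mod_cast Nat.lt_two_pow_self (n := K)
      have h3 : (2:ℤ) ^ K ≤ 2 ^ n₁ := pow_le_pow_right₀ (by norm_num) (by omega)
      have : (K : ℤ) = 3 * e.natAbs + 3 := by rw [hK]; push_cast; ring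
      omega
    have hub : 3 * (u n₁ : ℤ) + 1 ≤ 2 ^ n₁ := by exact_mod_cast u_even_bound heven
    have habs : (e.natAbs : ℤ) = -e := Int.ofNat_natAbs_of_nonpos (by omega)
    have hpos : (0:ℤ) < (u n₁ : ℤ) - e := by
      have : (0:ℤ) ≤ (u n₁ : ℤ) := Int.ofNat_nonneg _
      omega
    have hlt : (u n₁ : ℤ) - e < 2 ^ n₁ := by omega
    have hpow : (0:ℤ) < 2 ^ n₁ := by positivity
    -- m * 2^n₁ ∈ (0, 2^n₁) impossible
    rcases le_or_gt m 0 with hm0 | hm0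
    · nlinarith
    · have : (1:ℤ) ≤ m := hm0
      nlinarith

end
end

section
/- In a finite simple graph that is 2-connected (biconnected), for any two distinct vertices u and v and any two distinct vertices u' and v', there exist two vertex-disjoint paths, one from u to u' and one from v to v', or one from u to v' and one from v to u'. -/
/-- A finite simple graph is 2-connected (biconnected) if it has at least 3
vertices, is connected, and remains connected after deleting any single vertex. -/
def SimpleGraph.TwoConnected {V : Type*} [Fintype V] (G : SimpleGraph V) : Prop :=
  3 ≤ Fintype.card V ∧ G.Connected ∧
    ∀ v : V, (G.induce {w : V | w ≠ v}).Connected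


namespace TwoConnAux
open SimpleGraph

variable {W : Type*} {H : SimpleGraph W}



lemma avoid_aux {x : W} (hsep : (H.induce {w : W | w ≠ x}).Connected) {a b : W}
    (ha : a ≠ x) (hb : b ≠ x) :
    ∃ p : H.Walk a b, p.IsPath ∧ x ∉ p.support := by
  classical
  obtain ⟨q⟩ := hsep ⟨a, (ha : a ∈ {w : W | w ≠ x})⟩ ⟨b, (hb : b ∈ {w : W | w ≠ x})⟩
  let q' : H.Walk a b := q.map (SimpleGraph.Embedding.induce {w : W | w ≠ x}).toHom
  refine ⟨q'.bypass, q'.bypass_isPath, fun hx => ?_⟩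
  have hx' := q'.support_bypass_subset hx
  rw [show q'.support = (q.map (SimpleGraph.Embedding.induce {w : W | w ≠ x}).toHom).support from rfl,
    SimpleGraph.Walk.support_map] at hx'
  obtain ⟨⟨y, hy⟩, _, h2⟩ := List.mem_map.mp hx'
  exact hy h2

lemma not_end_mem_takeUntil [DecidableEq W] {a x y : W} (p : H.Walk a x) (hp : p.IsPath)
    (hy : y ∈ p.support) (hyx : y ≠ x) : x ∉ (p.takeUntil y hy).support := by
  intro hx
  have hspec := p.take_spec hy
  have hnd : p.support.Nodup := hp.support_nodup
  rw [← hspec, SimpleGraph.Walk.support_append] at hnd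
  have hxd : x ∈ (p.dropUntil y hy).support.tail := by
    have h1 := (p.dropUntil y hy).end_mem_support
    have h2 := (p.dropUntil y hy).support_eq_cons
    rw [h2] at h1
    rcases List.mem_cons.mp h1 with h | h
    · exact absurd h.symm hyx
    · rw [h2]; exact h
  exact (List.disjoint_of_nodup_append hnd) hx hxd


/-- helper: extract final segment of a walk hitting a set only at its start from the far end. -/
lemma last_mem_segment (S : Set W) :
    ∀ {b a : W} (p : H.Walk b a), a ∈ S →
      ∃ y, y ∈ S ∧ ∃ q : H.Walk b y,
        (∀ w ∈ q.support, w ∈ S → w = y) ∧ q.support ⊆ p.support := by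
  classical
  intro b a p
  induction p with
  | nil =>
    intro ha
    exact ⟨_, ha, Walk.nil, by simp, by simp⟩
  | @cons b c a h p ih =>
    intro ha
    by_cases hb : b ∈ S
    · refine ⟨b, hb, Walk.nil, by simp, by simp⟩
    · obtain ⟨y, hy, q, hq1, hq2⟩ := ih ha
      refine ⟨y, hy, Walk.cons h q, ?_, ?_⟩
      · intro w hw hwS
        rw [Walk.support_cons, List.mem_cons] at hw
        rcases hw with rfl | hw
        · exact absurd hwS hb
        · exact hq1 w hw hwS
      · intro w hw
        rw [Walk.support_cons, List.mem_cons] at hw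
        rw [Walk.support_cons, List.mem_cons]
        rcases hw with rfl | hw
        · exact Or.inl rfl
        · exact Or.inr (hq2 hw)

/-- Core construction step for internally disjoint paths. -/
lemma core_step {a x b y : W} (P1 P2 : H.Walk a x)
    (hd : ∀ w ∈ P1.support, w ∈ P2.support → w = a ∨ w = x)
    (hP1 : P1.IsPath) (hxb : H.Adj x b)
    (hy1 : y ∈ P1.support) (hyx : y ≠ x)
    (T : H.Walk y b)
    (hTS : ∀ w ∈ T.support, w ∈ P1.support ∨ w ∈ P2.support → w = y)
    (hxT : x ∉ T.support) :
    ∃ P Q : H.Walk a b, P.IsPath ∧ Q.IsPath ∧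
      ∀ w ∈ P.support, w ∈ Q.support → w = a ∨ w = b := by
  classical
  set A : H.Walk a b := (P1.takeUntil y hy1).append T with hA
  set B : H.Walk a b := P2.concat hxb with hB
  refine ⟨A.bypass, B.bypass, A.bypass_isPath, B.bypass_isPath, ?_⟩
  intro w hwP hwQ
  have hwA : w ∈ (P1.takeUntil y hy1).support ∨ w ∈ T.support := by
    have := A.support_bypass_subset hwP
    rw [hA, Walk.support_append, List.mem_append] at this
    rcases this with h | h
    · exact Or.inl h
    · exact Or.inr (List.mem_of_mem_tail h)
  have hwB : w ∈ P2.support ∨ w = b := by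
    have := B.support_bypass_subset hwQ
    rw [hB, Walk.support_concat] at this
    simpa using this
  rcases hwB with hwB | rfl
  · rcases hwA with hwA | hwA
    · have hw1 : w ∈ P1.support := P1.support_takeUntil_subset hy1 hwA
      rcases hd w hw1 hwB with rfl | rfl
      · exact Or.inl rfl
      · exact absurd hwA (not_end_mem_takeUntil P1 hP1 hy1 hyx)
    · have := hTS w hwA (Or.inr hwB)
      subst this
      rcases hd w hy1 hwB with rfl | rfl
      · exact Or.inl rfl
      · exact absurd rfl hyx
  · exact Or.inr rfl

/-- Two internally disjoint paths between any two distinct vertices of a graph all of whose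
single-vertex-deleted subgraphs are connected. -/
lemma two_disjoint_paths_aux (hconn : H.Connected)
    (hsep : ∀ x : W, (H.induce {w : W | w ≠ x}).Connected) :
    ∀ (n : ℕ) {a b : W}, a ≠ b → H.dist a b = n →
      ∃ P Q : H.Walk a b, P.IsPath ∧ Q.IsPath ∧
        ∀ w ∈ P.support, w ∈ Q.support → w = a ∨ w = b := by
  intro n
  induction n with
  | zero =>
    intro a b hab hd
    have := hconn.pos_dist_of_ne hab; omega
  | succ n ih =>
    intro a b hab hdist
    rcases Nat.eq_zero_or_pos n with rfl | hn
    · -- dist = 1 : adjacent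
      have hadj : H.Adj a b := dist_eq_one_iff_adj.mp hdist
      refine ⟨Walk.cons hadj Walk.nil, Walk.cons hadj Walk.nil, ?_, ?_, ?_⟩
      · simp [Walk.isPath_def, hadj.ne]
      · simp [Walk.isPath_def, hadj.ne]
      · intro w hw _
        simpa using hw
    · obtain ⟨p, hp⟩ := (hconn a b).exists_walk_length_eq_dist
      rw [hdist] at hp
      -- decompose from the b end
      have hrev : p.reverse.length = n + 1 := by simpa using hp
      obtain ⟨x, hbx, q, hq⟩ : ∃ (x : W) (_ : H.Adj b x) (q : H.Walk x a),
          q.length = n := by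
        cases hpr : p.reverse with
        | nil => rw [hpr] at hrev; simp at hrev
        | cons h q =>
          rw [hpr] at hrev
          exact ⟨_, h, q, by simpa using hrev⟩
      have hxb : H.Adj x b := hbx.symm
      have hdax : H.dist a x = n := by
        have h1 : H.dist a x ≤ n := by
          have := dist_le q.reverse
          simpa [hq] using this
        have h2 : n + 1 ≤ H.dist a x + 1 := by
          calc n + 1 = H.dist a b := hdist.symm
            _ ≤ H.dist a x + H.dist x b := hconn.dist_triangle
            _ ≤ H.dist a x + 1 := by
                have : H.dist x b ≤ 1 := by
                  simpa using dist_le (Walk.cons hxb Walk.nil)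
                omega
        omega
      have hax : a ≠ x := by
        intro h; subst h; rw [dist_self] at hdax; omega
      have hbxne : b ≠ x := hbx.ne
      obtain ⟨P1, P2, hP1, hP2, hd12⟩ := ih hax hdax
      have hd21 : ∀ w ∈ P2.support, w ∈ P1.support → w = a ∨ w = x :=
        fun w h2 h1 => hd12 w h1 h2
      have hbxa : b ≠ a := hab.symm
      by_cases hb1 : b ∈ P1.support
      · exact core_step P1 P2 hd12 hP1 hxb hb1 hbxne Walk.nil
          (by intro w hw _; simpa using hw) (by simpa using hbxne.symm)
      by_cases hb2 : b ∈ P2.support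
      · exact core_step P2 P1 hd21 hP2 hxb hb2 hbxne Walk.nil
          (by intro w hw _; simpa using hw) (by simpa using hbxne.symm)
      -- general case: path from a to b avoiding x
      obtain ⟨Q, hQp, hxQ⟩ := avoid_aux (hsep x) hax hbxne
      obtain ⟨y, hyS, q', hq'1, hq'2⟩ := last_mem_segment
        {w | w ∈ P1.support ∨ w ∈ P2.support} Q.reverse
        (by simpa using Or.inl P1.start_mem_support)
      have hq'Q : ∀ w ∈ q'.support, w ∈ Q.support := by
        intro w hw
        have := hq'2 hw
        rwa [Walk.support_reverse, List.mem_reverse] at this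
      have hyx : y ≠ x := by
        intro h; subst h
        exact hxQ (hq'Q _ q'.end_mem_support)
      have hxT : x ∉ q'.reverse.support := by
        rw [Walk.support_reverse, List.mem_reverse]
        exact fun h => hxQ (hq'Q _ h)
      have hTS : ∀ w ∈ q'.reverse.support, w ∈ P1.support ∨ w ∈ P2.support → w = y := by
        intro w hw hwS
        rw [Walk.support_reverse, List.mem_reverse] at hw
        exact hq'1 w hw hwS
      rcases hyS with hy1 | hy2
      · exact core_step P1 P2 hd12 hP1 hxb hy1 hyx q'.reverse hTS hxT
      · exact core_step P2 P1 hd21 hP2 hxb hy2 hyx q'.reverse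
          (fun w hw hwS => hTS w hw hwS.symm) hxT

variable {V : Type*}

def augGraph (G : SimpleGraph V) (u v u' v' : V) : SimpleGraph (V ⊕ Bool) where
  Adj a b := match a, b with
    | Sum.inl x, Sum.inl y => G.Adj x y
    | Sum.inl x, Sum.inr false => x = u ∨ x = v
    | Sum.inr false, Sum.inl x => x = u ∨ x = v
    | Sum.inl x, Sum.inr true => x = u' ∨ x = v'
    | Sum.inr true, Sum.inl x => x = u' ∨ x = v'
    | Sum.inr _, Sum.inr _ => False
  symm := by
    constructor
    rintro (x | b) (y | c) h
    · exact G.adj_symm h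
    · cases c <;> exact h
    · cases b <;> exact h
    · cases b <;> cases c <;> exact h.elim
  loopless := by
    constructor
    rintro (x | b) h
    · exact G.irrefl h
    · cases b <;> exact h.elim

variable {G : SimpleGraph V} {u v u' v' : V}

/-- Homomorphism from a vertex-deleted `G` into the correspondingly deleted augmented graph. -/
def augHomDel (G : SimpleGraph V) (u v u' v' : V) (c : V) :
    (G.induce {w : V | w ≠ c}) →g
      ((augGraph G u v u' v').induce {w : V ⊕ Bool | w ≠ Sum.inl c}) where
  toFun := fun x => ⟨Sum.inl x.1, fun he => x.2 (Sum.inl.inj he)⟩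
  map_rel' := fun h => h

lemma augReachDel {c : V} {x y : {w : V | w ≠ c}}
    (h : (G.induce {w : V | w ≠ c}).Reachable x y) :
    ((augGraph G u v u' v').induce {w : V ⊕ Bool | w ≠ Sum.inl c}).Reachable
      ⟨Sum.inl x.1, fun he => x.2 (Sum.inl.inj he)⟩
      ⟨Sum.inl y.1, fun he => y.2 (Sum.inl.inj he)⟩ := by
  obtain ⟨p⟩ := h
  exact ⟨(p.map (augHomDel G u v u' v' c)).copy rfl rfl⟩

def augHomFull (G : SimpleGraph V) (u v u' v' : V) (s : Set (V ⊕ Bool))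
    (hs : ∀ x : V, Sum.inl x ∈ s) : G →g ((augGraph G u v u' v').induce s) where
  toFun := fun x => ⟨Sum.inl x, hs x⟩
  map_rel' := fun h => h

lemma augReachFull {s : Set (V ⊕ Bool)} (hs : ∀ x : V, Sum.inl x ∈ s) {x y : V}
    (h : G.Reachable x y) :
    ((augGraph G u v u' v').induce s).Reachable ⟨Sum.inl x, hs x⟩ ⟨Sum.inl y, hs y⟩ := by
  obtain ⟨p⟩ := h
  exact ⟨(p.map (augHomFull G u v u' v' s hs)).copy rfl rfl⟩

lemma augGraph_sep (hc : G.Connected) (hsep : ∀ c : V, (G.induce {w : V | w ≠ c}).Connected)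
    (huv : u ≠ v) (huv' : u' ≠ v') :
    ∀ z : V ⊕ Bool, ((augGraph G u v u' v').induce {w : V ⊕ Bool | w ≠ z}).Connected := by
  rintro (c | b)
  · -- delete a vertex of G
    obtain ⟨d, hd, hdc⟩ : ∃ d, (d = u ∨ d = v) ∧ d ≠ c := by
      by_cases h : u = c
      · exact ⟨v, Or.inr rfl, fun hv => huv (h.trans hv.symm) |>.elim⟩
      · exact ⟨u, Or.inl rfl, h⟩
    obtain ⟨d', hd', hdc'⟩ : ∃ d', (d' = u' ∨ d' = v') ∧ d' ≠ c := by
      by_cases h : u' = c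
      · exact ⟨v', Or.inr rfl, fun hv => huv' (h.trans hv.symm) |>.elim⟩
      · exact ⟨u', Or.inl rfl, h⟩
    rw [connected_iff]
    refine ⟨?_, ⟨⟨Sum.inr false, by simp⟩⟩⟩
    set s : Set (V ⊕ Bool) := {w | w ≠ Sum.inl c} with hsdef
    have hinl : ∀ x : V, x ≠ c → (Sum.inl x : V ⊕ Bool) ∈ s := by
      intro x hx he
      exact hx (Sum.inl.inj he)
    have hreach : ∀ (x : V) (hx : x ≠ c),
        ((augGraph G u v u' v').induce s).Reachable ⟨Sum.inl x, hinl x hx⟩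
          ⟨Sum.inl d, hinl d hdc⟩ := by
      intro x hx
      exact augReachDel ((hsep c) ⟨x, hx⟩ ⟨d, hdc⟩)
    have hp0 : (Sum.inr false : V ⊕ Bool) ∈ s := fun he => nomatch he
    have key : ∀ w : s, ((augGraph G u v u' v').induce s).Reachable w ⟨Sum.inr false, hp0⟩ := by
      rintro ⟨(x | b), hw⟩
      · have hx : x ≠ c := fun h => hw (by rw [h])
        refine (hreach x hx).trans (Adj.reachable ?_)
        exact hd
      · cases b
        · exact Reachable.refl _
        · refine (Adj.reachable (?_ : ((augGraph G u v u' v').induce s).Adj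
            ⟨Sum.inr true, hw⟩ ⟨Sum.inl d', hinl d' hdc'⟩)).trans
            ((hreach d' hdc').trans (Adj.reachable ?_))
          · exact hd'
          · exact hd
    exact fun a b => (key a).trans (key b).symm
  · -- delete one of the two new vertices
    rw [connected_iff]
    set s : Set (V ⊕ Bool) := {w | w ≠ Sum.inr b} with hsdef
    have hinl : ∀ x : V, (Sum.inl x : V ⊕ Bool) ∈ s := fun x he => by simp [hsdef] at he
    refine ⟨?_, ⟨⟨Sum.inl u, hinl u⟩⟩⟩
    have key : ∀ w : s, ((augGraph G u v u' v').induce s).Reachable w ⟨Sum.inl u, hinl u⟩ := by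
      rintro ⟨(x | b'), hw⟩
      · exact augReachFull hinl (hc x u)
      · have hbb : b' ≠ b := fun h => hw (by rw [h])
        cases b' with
        | false =>
          refine (Adj.reachable (?_ : ((augGraph G u v u' v').induce s).Adj
            ⟨Sum.inr false, hw⟩ ⟨Sum.inl u, hinl u⟩)).trans (Reachable.refl _)
          exact Or.inl rfl
        | true =>
          refine (Adj.reachable (?_ : ((augGraph G u v u' v').induce s).Adj
            ⟨Sum.inr true, hw⟩ ⟨Sum.inl u', hinl u'⟩)).trans (augReachFull hinl (hc u' u))
          exact Or.inl rfl
    exact fun a b => (key a).trans (key b).symm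


lemma augGraph_adj_inl_inl {x y : V} :
    (augGraph G u v u' v').Adj (Sum.inl x) (Sum.inl y) ↔ G.Adj x y := Iff.rfl

/-- Homomorphism from `G` into the augmented graph. -/
def augHom (G : SimpleGraph V) (u v u' v' : V) : G →g augGraph G u v u' v' where
  toFun := Sum.inl
  map_rel' := fun h => h

lemma augReach {x y : V} (h : G.Reachable x y) :
    (augGraph G u v u' v').Reachable (Sum.inl x) (Sum.inl y) := by
  obtain ⟨p⟩ := h
  exact ⟨(p.map (augHom G u v u' v')).copy rfl rfl⟩

lemma augGraph_connected (hc : G.Connected) : (augGraph G u v u' v').Connected := by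
  rw [connected_iff]
  refine ⟨?_, ⟨Sum.inl u⟩⟩
  have key : ∀ w : V ⊕ Bool, (augGraph G u v u' v').Reachable w (Sum.inl u) := by
    rintro (x | b)
    · exact augReach (hc x u)
    · cases b
      · exact (Adj.reachable (by exact Or.inl rfl :
          (augGraph G u v u' v').Adj (Sum.inr false) (Sum.inl u)))
      · exact (Adj.reachable (by exact Or.inl rfl :
          (augGraph G u v u' v').Adj (Sum.inr true) (Sum.inl u'))).trans
          (augReach (hc u' u))
  exact fun a b => (key a).trans (key b).symm

/-- Pull a walk of the augmented graph avoiding the two new vertices back to `G`. -/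
lemma augPull : ∀ {w1 w2 : V ⊕ Bool} (R : (augGraph G u v u' v').Walk w1 w2) {x y : V},
    w1 = Sum.inl x → w2 = Sum.inl y →
    (∀ w ∈ R.support, w ≠ Sum.inr false ∧ w ≠ Sum.inr true) →
    ∃ r : G.Walk x y, r.support.map Sum.inl = R.support := by
  intro w1 w2 R
  induction R with
  | nil =>
    intro x y h1 h2 _
    subst h1
    obtain rfl : x = y := Sum.inl.inj h2
    exact ⟨Walk.nil, by simp⟩
  | @cons a m w2 h R ih =>
    intro x y h1 h2 hsup
    subst h1
    have hm : m ≠ Sum.inr false ∧ m ≠ Sum.inr true := by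
      refine hsup m ?_
      rw [Walk.support_cons]
      exact List.mem_cons_of_mem _ R.start_mem_support
    obtain ⟨x', rfl⟩ : ∃ x', m = Sum.inl x' := by
      cases m with
      | inl x' => exact ⟨x', rfl⟩
      | inr b => cases b
                 · exact absurd rfl hm.1
                 · exact absurd rfl hm.2
    have hadj : G.Adj x x' := h
    have hsub2 : ∀ w ∈ R.support, w ≠ Sum.inr false ∧ w ≠ Sum.inr true := by
      intro w hw
      refine hsup w ?_
      rw [Walk.support_cons]
      exact List.mem_cons_of_mem _ hw
    obtain ⟨r, hr⟩ := ih rfl h2 hsub2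
    refine ⟨Walk.cons hadj r, ?_⟩
    rw [Walk.support_cons, Walk.support_cons, List.map_cons, hr]

/-- Extract from an `s`–`t` path of the augmented graph a path of `G` between
an endpoint choice. -/
lemma augExtract (P : (augGraph G u v u' v').Walk (Sum.inr false) (Sum.inr true))
    (hP : P.IsPath) :
    ∃ (p1 p2 : V), (p1 = u ∨ p1 = v) ∧ (p2 = u' ∨ p2 = v') ∧
      ∃ r : G.Walk p1 p2, r.IsPath ∧ ∀ w ∈ r.support, Sum.inl w ∈ P.support := by
  cases P with
  | cons h P₁ =>
    rename_i m
    obtain ⟨p1, rfl⟩ : ∃ p1, m = Sum.inl p1 := by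
      cases m with
      | inl p1 => exact ⟨p1, rfl⟩
      | inr b => cases b
                 · exact (h : False).elim
                 · exact (h : False).elim
    have hp1 : p1 = u ∨ p1 = v := h
    cases hrev : P₁.reverse with
    | cons h2 R =>
      rename_i m2
      obtain ⟨p2, rfl⟩ : ∃ p2, m2 = Sum.inl p2 := by
        cases m2 with
        | inl p2 => exact ⟨p2, rfl⟩
        | inr b => cases b
                   · exact (h2 : False).elim
                   · exact (h2 : False).elim
      have hp2 : p2 = u' ∨ p2 = v' := by
        have := h2.symm
        exact this
      -- support bookkeeping
      have hP1rev : P₁.support.reverse = Sum.inr true :: R.support := by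
        rw [← Walk.support_reverse, hrev, Walk.support_cons]
      have hndP : (Sum.inr false :: P₁.support).Nodup := by
        have := hP.support_nodup
        rwa [Walk.support_cons] at this
      have hndP₁ : P₁.support.Nodup := (List.nodup_cons.mp hndP).2
      have hndrev : (Sum.inr true :: R.support).Nodup := by
        rw [← hP1rev]; exact List.nodup_reverse.mpr hndP₁
      have hRsub : ∀ w ∈ R.support, w ∈ P₁.support := by
        intro w hw
        rw [← List.mem_reverse, hP1rev]
        exact List.mem_cons_of_mem _ hw
      have hsR : ∀ w ∈ R.support, w ≠ Sum.inr false ∧ w ≠ Sum.inr true := by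
        intro w hw
        constructor
        · rintro rfl
          exact (List.nodup_cons.mp hndP).1 (hRsub _ hw)
        · rintro rfl
          exact (List.nodup_cons.mp hndrev).1 hw
      obtain ⟨r, hr⟩ := augPull R rfl rfl hsR
      have hrnd : r.support.Nodup := by
        have : (r.support.map (Sum.inl : V → V ⊕ Bool)).Nodup := by
          rw [hr]; exact (List.nodup_cons.mp hndrev).2
        exact this.of_map _
      refine ⟨p1, p2, hp1, hp2, r.reverse, ?_, ?_⟩
      · rw [Walk.isPath_def, Walk.support_reverse]
        exact List.nodup_reverse.mpr hrnd
      · intro w hw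
        rw [Walk.support_reverse, List.mem_reverse] at hw
        have : (Sum.inl w : V ⊕ Bool) ∈ r.support.map (Sum.inl : V → V ⊕ Bool) := List.mem_map_of_mem hw
        rw [hr] at this
        rw [Walk.support_cons]
        exact List.mem_cons_of_mem _ (hRsub _ this)

end TwoConnAux

/-- In a finite simple 2-connected graph, for any two distinct
vertices `u, v` and any two distinct vertices `u', v'`, there exist two
vertex-disjoint paths, one from `u` to `u'` and one from `v` to `v'`, or one from
`u` to `v'` and one from `v` to `u'`. -/
theorem SimpleGraph.TwoConnected.disjoint_paths {V : Type*} [Fintype V]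
    (G : SimpleGraph V) (hG : G.TwoConnected)
    (u v u' v' : V) (huv : u ≠ v) (huv' : u' ≠ v') :
    (∃ (P : G.Walk u u') (Q : G.Walk v v'),
        P.IsPath ∧ Q.IsPath ∧ P.support.Disjoint Q.support) ∨
    (∃ (P : G.Walk u v') (Q : G.Walk v u'),
        P.IsPath ∧ Q.IsPath ∧ P.support.Disjoint Q.support) := by
  classical
  open TwoConnAux in
  obtain ⟨-, hconn, hsep⟩ := hG
  by_cases h1 : u = u'
  · subst h1
    obtain ⟨Q, hQp, hQav⟩ := avoid_aux (hsep u) (huv.symm) (fun h => huv' (h.symm ▸ rfl))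
    refine Or.inl ⟨Walk.nil, Q, by simp, hQp, ?_⟩
    intro a ha hb
    rw [Walk.support_nil, List.mem_singleton] at ha
    subst ha; exact hQav hb
  by_cases h2 : u = v'
  · subst h2
    obtain ⟨Q, hQp, hQav⟩ := avoid_aux (hsep u) (huv.symm) (fun h => huv' (h ▸ rfl))
    refine Or.inr ⟨Walk.nil, Q, by simp, hQp, ?_⟩
    intro a ha hb
    rw [Walk.support_nil, List.mem_singleton] at ha
    subst ha; exact hQav hb
  by_cases h3 : v = v'
  · subst h3
    obtain ⟨P, hPp, hPav⟩ := avoid_aux (hsep v) huv (fun h => huv' (h ▸ rfl))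
    refine Or.inl ⟨P, Walk.nil, hPp, by simp, ?_⟩
    intro a ha hb
    rw [Walk.support_nil, List.mem_singleton] at hb
    subst hb; exact hPav ha
  by_cases h4 : v = u'
  · subst h4
    obtain ⟨P, hPp, hPav⟩ := avoid_aux (hsep v) huv (fun h => huv' (h.symm ▸ rfl))
    refine Or.inr ⟨P, Walk.nil, hPp, by simp, ?_⟩
    intro a ha hb
    rw [Walk.support_nil, List.mem_singleton] at hb
    subst hb; exact hPav ha
  -- generic case: all four vertices distinct
  have haugc : (augGraph G u v u' v').Connected := augGraph_connected hconn
  have haugs := augGraph_sep (G := G) (u := u) (v := v) (u' := u') (v' := v') hconn hsep huv huv'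
  have hst : (Sum.inr false : V ⊕ Bool) ≠ Sum.inr true := by simp
  obtain ⟨P, Q, hPp, hQp, hdisj⟩ := two_disjoint_paths_aux haugc haugs
    ((augGraph G u v u' v').dist (Sum.inr false) (Sum.inr true)) hst rfl
  obtain ⟨p1, p2, hp1, hp2, rP, hrPp, hrPsub⟩ := augExtract P hPp
  obtain ⟨q1, q2, hq1, hq2, rQ, hrQp, hrQsub⟩ := augExtract Q hQp
  have hdisjG : rP.support.Disjoint rQ.support := by
    intro a haP haQ
    have h := hdisj (Sum.inl a) (hrPsub a haP) (hrQsub a haQ)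
    simp at h
  have hne1 : p1 ≠ q1 := by
    rintro rfl
    exact hdisjG rP.start_mem_support rQ.start_mem_support
  have hne2 : p2 ≠ q2 := by
    rintro rfl
    exact hdisjG rP.end_mem_support rQ.end_mem_support
  rcases hp1 with rfl | rfl <;> rcases hq1 with rfl | rfl <;>
    rcases hp2 with rfl | rfl <;> rcases hq2 with rfl | rfl <;>
    first
      | exact absurd rfl hne1
      | exact absurd rfl hne2
      | exact Or.inl ⟨rP, rQ, hrPp, hrQp, hdisjG⟩
      | exact Or.inr ⟨rP, rQ, hrPp, hrQp, hdisjG⟩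
      | exact Or.inl ⟨rQ, rP, hrQp, hrPp, hdisjG.symm⟩
      | exact Or.inr ⟨rQ, rP, hrQp, hrPp, hdisjG.symm⟩
end
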